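/- Fix w ∈ ℝ^n, b ∈ ℝ, x ∈ ℝ^n, a clipping threshold M ≥ 0, and bounds L, U ∈ ℝ with L ≤ w·x + b ≤ U. Write t = w·x + b. Then a real number y satisfies, for some z₁, z₂ ∈ {0,1} with z₁ ≥ z₂, the constraints y ≥ 0, y ≤ M·z₁, y ≤ U·z₁, y ≤ t − L·(1 − z₁), y ≥ M·z₂, and y ≥ t − (U − M)·z₂, if and only if y = max(0, min(M, t)). -/
import Mathlib


/-- Big-M formulation of a single clipped-ReLU neuron is exact:
given a clipping threshold `M ≥ 0` and valid pre-activation bounds `L ≤ w·x + b ≤ U`,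
a real `y` satisfies the big-M constraints for some binaries `z₁ ≥ z₂`
iff `y = max 0 (min M (w·x + b))`. -/
theorem bigM_clipped_relu_exact (n : ℕ) (w x : Fin n → ℝ) (b M L U : ℝ) (hM : 0 ≤ M)
    (hL : L ≤ (∑ i, w i * x i) + b) (hU : (∑ i, w i * x i) + b ≤ U) (y : ℝ) :
    (∃ z₁ z₂ : ℝ, (z₁ = 0 ∨ z₁ = 1) ∧ (z₂ = 0 ∨ z₂ = 1) ∧ z₂ ≤ z₁ ∧
        0 ≤ y ∧
        y ≤ M * z₁ ∧
        y ≤ U * z₁ ∧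
        y ≤ (∑ i, w i * x i) + b - L * (1 - z₁) ∧
        M * z₂ ≤ y ∧
        (∑ i, w i * x i) + b - (U - M) * z₂ ≤ y) ↔
      y = max 0 (min M ((∑ i, w i * x i) + b)) := by
  set t := (∑ i, w i * x i) + b with ht
  constructor
  · rintro ⟨z₁, z₂, h1 | h1, h2 | h2, hle, hy0, hM1, hU1, hL1, hM2, hU2⟩ <;>
      subst h1 <;> subst h2
    · have hyz : y = 0 := by linarith
      have htle : t ≤ 0 := by linarith
      rw [max_eq_left (le_trans (min_le_right M t) htle)]
      linarith
    · linarith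
    · have hyt : y = t := le_antisymm (by linarith) (by linarith)
      rw [min_eq_right (by linarith : t ≤ M), max_eq_right (by linarith : (0:ℝ) ≤ t)]
      linarith
    · have hyM : y = M := by linarith
      rw [min_eq_left (by linarith : M ≤ t), max_eq_right hM]
      linarith
  · intro hy
    rcases le_total t 0 with h0 | h0
    · refine ⟨0, 0, Or.inl rfl, Or.inl rfl, le_refl _, ?_, ?_, ?_, ?_, ?_, ?_⟩ <;>
        rw [hy, max_eq_left (le_trans (min_le_right M t) h0)] <;> linarith
    · rcases le_total t M with h1 | h1
      · refine ⟨1, 0, Or.inr rfl, Or.inl rfl, by norm_num, ?_, ?_, ?_, ?_, ?_, ?_⟩ <;>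
          rw [hy, min_eq_right h1, max_eq_right h0] <;> linarith
      · refine ⟨1, 1, Or.inr rfl, Or.inr rfl, le_refl _, ?_, ?_, ?_, ?_, ?_, ?_⟩ <;>
          rw [hy, min_eq_left h1, max_eq_right hM] <;> linarith
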